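/- arXiv:2112.03567 — 2 statements merged into one kernel-verified Lean document; each statement's English description precedes it below -/
import Mathlib

section
/- The number π / arccos(-1/4) is irrational. -/
open Real

lemma key_aux (θ : ℝ) (h : Real.cos θ = -1/4) :
    ∀ n : ℕ, ∃ a : ℤ, 2 * Real.cos (n * θ) = (a : ℝ) / 2 ^ n ∧ (1 ≤ n → Odd a) := by
  have H : ∀ n : ℕ,
      (∃ a : ℤ, 2 * Real.cos (n * θ) = (a : ℝ) / 2 ^ n ∧ (1 ≤ n → Odd a)) ∧
      (∃ a : ℤ, 2 * Real.cos ((n+1) * θ) = (a : ℝ) / 2 ^ (n+1) ∧ (1 ≤ n+1 → Odd a)) := by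
    intro n
    induction n with
    | zero =>
      constructor
      · exact ⟨2, by norm_num, by omega⟩
      · exact ⟨-1, by norm_num [h], fun _ => ⟨-1, by ring⟩⟩
    | succ n ih =>
      obtain ⟨⟨a₀, ha₀, _⟩, ⟨a₁, ha₁, hodd₁⟩⟩ := ih
      refine ⟨⟨a₁, by push_cast; exact ha₁, hodd₁⟩, ⟨-a₁ - 4 * a₀, ?_, fun _ => ?_⟩⟩
      · have hrec : Real.cos ((n+2 : ℕ) * θ) =
            2 * Real.cos θ * Real.cos ((n+1 : ℕ) * θ) - Real.cos ((n : ℕ) * θ) := by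
          have h1 := Real.cos_add ((n+1 : ℕ) * θ) θ
          have h2 := Real.cos_sub ((n+1 : ℕ) * θ) θ
          have e1 : ((n+1 : ℕ) : ℝ) * θ + θ = ((n+2 : ℕ) : ℝ) * θ := by push_cast; ring
          have e2 : ((n+1 : ℕ) : ℝ) * θ - θ = ((n : ℕ) : ℝ) * θ := by push_cast; ring
          rw [e1] at h1; rw [e2] at h2
          nlinarith [h1, h2]
        push_cast at hrec ⊢
        have e3 : ((n:ℝ) + 1 + 1) * θ = ((n:ℝ) + 2) * θ := by ring
        rw [e3, hrec, h]
        have h2n : (2:ℝ) ^ n ≠ 0 := by positivity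
        field_simp at ha₀ ha₁ ⊢
        ring_nf
        ring_nf at ha₀ ha₁
        rw [show (n:ℝ) * θ + θ = θ + θ * n by ring] at ha₁
        rw [show (n:ℝ) * θ = θ * n by ring] at ha₀
        nlinarith [ha₀, ha₁]
      · have := hodd₁ (by omega)
        obtain ⟨k, hk⟩ := this
        exact ⟨-k - 2 * a₀ - 1, by omega⟩
  exact fun n => (H n).1

theorem stmt_1 : Irrational (π / Real.arccos (-1/4)) := by
  set θ := Real.arccos (-1/4) with hθdef
  have hcos : Real.cos θ = -1/4 := Real.cos_arccos (by norm_num) (by norm_num)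
  have hθpos : 0 < θ := Real.arccos_pos.mpr (by norm_num)
  intro ⟨r, hr⟩
  -- π = r * θ
  have hπ : π = (r : ℝ) * θ := by
    field_simp at hr
    linarith [hr]
  have hrpos : (0:ℝ) < (r:ℝ) := by
    have := Real.pi_pos
    nlinarith
  have hrq : 0 < r := by exact_mod_cast hrpos
  set p : ℕ := r.num.toNat with hp
  have hpnum : (p : ℤ) = r.num := Int.toNat_of_nonneg (by positivity)
  have hppos : 0 < p := by
    have : 0 < r.num := Rat.num_pos.mpr hrq
    omega
  -- p * θ = r.den * π
  have hpθ : (p : ℝ) * θ = (r.den : ℝ) * π := by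
    have : ((r.num : ℝ)) = (r.den : ℝ) * (r : ℝ) := by
      rw [Rat.cast_def]
      field_simp
    rw [hπ]
    have hpc : (p : ℝ) = (r.num : ℝ) := by exact_mod_cast hpnum
    rw [hpc, this]; ring
  have habs : |Real.cos ((p : ℕ) * θ)| = 1 := by
    rw [hpθ]
    have := Real.abs_cos_int_mul_pi (r.den : ℤ)
    simpa using this
  obtain ⟨a, ha, hodd⟩ := key_aux θ hcos p
  have hodd' := hodd hppos
  have hA : |(a : ℝ)| = 2 ^ (p + 1) := by
    have h2p : (0:ℝ) < 2 ^ p := by positivity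
    have haval : (a : ℝ) = 2 ^ p * (2 * Real.cos (p * θ)) := by
      rw [ha]; field_simp
    rw [haval, abs_mul, abs_mul, habs]
    rw [abs_of_pos h2p]
    norm_num; ring
  have hAint : |a| = 2 ^ (p + 1) := by
    have : ((|a| : ℤ) : ℝ) = ((2 ^ (p+1) : ℤ) : ℝ) := by push_cast; exact hA
    exact_mod_cast this
  rcases abs_eq (by positivity : (0:ℤ) ≤ 2 ^ (p+1)) |>.mp hAint with h' | h' <;>
  · obtain ⟨k, hk⟩ := hodd'
    have hev : (2:ℤ) ∣ 2 ^ (p + 1) := dvd_pow_self 2 (by omega)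
    obtain ⟨m, hm⟩ := hev
    omega
end

section
/- The function u₁(r,θ) = √(1155/(8π)) · (3cos⁵r - 4cos³r + cos r) · sin(2θ) on the spherical triangle {(r,θ) : 0 < θ < π/2, 0 < r < π/2} satisfies the Laplace–Beltrami eigenvalue equation -(1/sin r)∂_r(sin r ∂_r u) - (1/sin²r)∂²_θ u = 30 u. -/
open Real

noncomputable def u₁ (r θ : ℝ) : ℝ :=
  Real.sqrt (1155 / (8 * π)) *
    (3 * Real.cos r ^ 5 - 4 * Real.cos r ^ 3 + Real.cos r) * Real.sin (2 * θ)

lemma hasDerivf (C t s : ℝ) :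
    HasDerivAt (fun r => C * (3 * Real.cos r ^ 5 - 4 * Real.cos r ^ 3 + Real.cos r) * Real.sin (2*t))
      (C * ((15 * Real.cos s ^ 4 - 12 * Real.cos s ^ 2 + 1) * (-Real.sin s)) * Real.sin (2*t)) s := by
  have hc : HasDerivAt Real.cos (-Real.sin s) s := Real.hasDerivAt_cos s
  have hf := ((((hc.pow 5).const_mul (3:ℝ)).sub ((hc.pow 3).const_mul (4:ℝ))).add hc)
  have := ((hf.const_mul C).mul_const (Real.sin (2*t)))
  refine this.congr_deriv ?_
  norm_num
  ring

theorem stmt_5 (r θ : ℝ) (hr : r ∈ Set.Ioo (0 : ℝ) (π / 2))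
    (hθ : θ ∈ Set.Ioo (0 : ℝ) (π / 2)) :
    -(1 / Real.sin r) *
        deriv (fun r' => Real.sin r' * deriv (fun r'' => u₁ r'' θ) r') r -
      (1 / Real.sin r ^ 2) * deriv (deriv (fun θ' => u₁ r θ')) θ = 30 * u₁ r θ := by
  set C := Real.sqrt (1155 / (8 * π)) with hC
  have hs : Real.sin r ≠ 0 := by
    have := Real.sin_pos_of_pos_of_lt_pi hr.1 (lt_trans hr.2 (by linarith [Real.pi_pos]))
    linarith
  -- first radial derivative
  have h1 : (fun r' => Real.sin r' * deriv (fun r'' => u₁ r'' θ) r')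
      = fun r' => Real.sin r' *
          (C * ((15 * Real.cos r' ^ 4 - 12 * Real.cos r' ^ 2 + 1) * (-Real.sin r')) * Real.sin (2*θ)) := by
    funext s
    rw [show (fun r'' => u₁ r'' θ)
        = fun r => C * (3 * Real.cos r ^ 5 - 4 * Real.cos r ^ 3 + Real.cos r) * Real.sin (2*θ)
        from rfl, (hasDerivf C θ s).deriv]
  rw [h1]
  -- second radial derivative
  have hc : HasDerivAt Real.cos (-Real.sin r) r := Real.hasDerivAt_cos r
  have hP : HasDerivAt (fun s => 15 * Real.cos s ^ 4 - 12 * Real.cos s ^ 2 + 1)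
      ((15 * (4 * Real.cos r ^ 3 * (-Real.sin r)) - 12 * (2 * Real.cos r ^ 1 * (-Real.sin r)))) r := by
    have := (((hc.pow 4).const_mul (15:ℝ)).sub ((hc.pow 2).const_mul (12:ℝ))).add_const (1:ℝ)
    exact this.congr_deriv (by norm_num)
  have hinner := ((hP.mul (Real.hasDerivAt_sin r).neg).const_mul C).mul_const (Real.sin (2*θ))
  have hfull := (Real.hasDerivAt_sin r).mul hinner
  erw [hfull.deriv]
  -- theta derivatives
  have h2 : deriv (fun θ' => u₁ r θ')
      = fun t => (C * (3 * Real.cos r ^ 5 - 4 * Real.cos r ^ 3 + Real.cos r)) * (Real.cos (2*t) * 2) := by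
    funext t
    have h2t : HasDerivAt (fun x : ℝ => 2 * x) 2 t := by
      simpa using (hasDerivAt_id t).const_mul (2:ℝ)
    exact ((h2t.sin).const_mul _).deriv
  rw [h2]
  have h2t : HasDerivAt (fun x : ℝ => 2 * x) 2 θ := by
    simpa using (hasDerivAt_id θ).const_mul (2:ℝ)
  have hsec := ((h2t.cos.mul_const (2:ℝ)).const_mul
      (C * (3 * Real.cos r ^ 5 - 4 * Real.cos r ^ 3 + Real.cos r)))
  rw [hsec.deriv]
  have hsq : Real.sin r ^ 2 = 1 - Real.cos r ^ 2 := Real.sin_sq r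
  simp only [u₁, ← hC, Pi.mul_apply, Pi.neg_apply]
  field_simp
  ring_nf
  linear_combination (C * Real.sin (θ*2) * Real.cos r * ((-16 + 96*Real.sin r^2 - 60*Real.sin r^4) + (12 - 60*Real.sin r^2)*(Real.cos r^2 + 1 - Real.sin r^2))) * hsq
end
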